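/- For an I_X × I_Y × I_Z probability table with positive stratum probabilities, expressed via correlation coefficients: D_{X_i,Y_j} - D̄_{X_i,Y_j|Z} = Σ_k √(p_{i,•,•}(1-p_{i,•,•}) p_{•,j,•}(1-p_{•,j,•})) ρ_{X_i,Z_k} ρ_{Y_j,Z_k} (1 - p_{•,•,k}), where ρ_{X_i,Z_k} = D_{X_i,Z_k}/√(p_{i,•,•}(1-p_{i,•,•}) p_{•,•,k}(1-p_{•,•,k})) and similarly for ρ_{Y_j,Z_k}; in the 2×2×2 case this reduces to D_{X_1,Y_1} - D̄_{X_1,Y_1|Z} = √(p_{1,•,•}(1-p_{1,•,•}) p_{•,1,•}(1-p_{•,1,•})) ρ_{X_1,Z_1} ρ_{Y_1,Z_1}. -/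

import Mathlib

lemma sqrt_helper (A B C x y : ℝ) (hA : 0 < A) (hB : 0 < B) (hC : 0 < C) :
    Real.sqrt (A*B) * (x / Real.sqrt (A*C)) * (y / Real.sqrt (B*C)) = x*y/C := by
  rw [Real.sqrt_mul hA.le, Real.sqrt_mul hA.le, Real.sqrt_mul hB.le]
  have hsA : Real.sqrt A ≠ 0 := (Real.sqrt_pos.mpr hA).ne'
  have hsB : Real.sqrt B ≠ 0 := (Real.sqrt_pos.mpr hB).ne'
  have hsC : Real.sqrt C ≠ 0 := (Real.sqrt_pos.mpr hC).ne'
  field_simp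
  rw [Real.sq_sqrt hC.le]
  ring

set_option maxHeartbeats 2000000 in
lemma strat (c x u : ℝ) (hc : c ≠ 0) : c * (x / c - u / c ^ 2) = x - u / c := by
  field_simp

lemma combine (c u v w D : ℝ) (hc : c ≠ 0) (hc' : 1 - c ≠ 0)
    (h : u * (1 - c) + v * c - w * (c * (1 - c)) = D) :
    u / c + v / (1 - c) - w = D / (c * (1 - c)) := by
  field_simp
  linarith [h]

theorem simpson_correlation_form (p : Fin 2 × Fin 2 × Fin 2 → ℝ)
    (hpos : ∀ x, 0 ≤ p x) (hsum : ∑ x, p x = 1)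
    (hx0 : 0 < ∑ j, ∑ k, p (0, j, k)) (hx1 : (∑ j, ∑ k, p (0, j, k)) < 1)
    (hy0 : 0 < ∑ i, ∑ k, p (i, 0, k)) (hy1 : (∑ i, ∑ k, p (i, 0, k)) < 1)
    (hz0 : 0 < ∑ i, ∑ j, p (i, j, 0)) (hz1 : (∑ i, ∑ j, p (i, j, 0)) < 1) :
    ((∑ k, p (0, 0, k)) -
        (∑ j, ∑ k, p (0, j, k)) * (∑ i, ∑ k, p (i, 0, k))) -
      (∑ k, (∑ i, ∑ j, p (i, j, k)) *
        (p (0, 0, k) / (∑ i, ∑ j, p (i, j, k)) -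
          (∑ j, p (0, j, k)) * (∑ i, p (i, 0, k)) /
            (∑ i, ∑ j, p (i, j, k)) ^ 2)) =
    Real.sqrt ((∑ j, ∑ k, p (0, j, k)) * (1 - ∑ j, ∑ k, p (0, j, k)) *
        ((∑ i, ∑ k, p (i, 0, k)) * (1 - ∑ i, ∑ k, p (i, 0, k)))) *
      (((∑ j, p (0, j, 0)) -
          (∑ j, ∑ k, p (0, j, k)) * (∑ i, ∑ j, p (i, j, 0))) /
        Real.sqrt ((∑ j, ∑ k, p (0, j, k)) * (1 - ∑ j, ∑ k, p (0, j, k)) *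
          ((∑ i, ∑ j, p (i, j, 0)) * (1 - ∑ i, ∑ j, p (i, j, 0))))) *
      (((∑ i, p (i, 0, 0)) -
          (∑ i, ∑ k, p (i, 0, k)) * (∑ i, ∑ j, p (i, j, 0))) /
        Real.sqrt ((∑ i, ∑ k, p (i, 0, k)) * (1 - ∑ i, ∑ k, p (i, 0, k)) *
          ((∑ i, ∑ j, p (i, j, 0)) * (1 - ∑ i, ∑ j, p (i, j, 0))))) := by
  have hA : 0 < (∑ j, ∑ k, p (0, j, k)) * (1 - ∑ j, ∑ k, p (0, j, k)) := by nlinarith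
  have hB : 0 < (∑ i, ∑ k, p (i, 0, k)) * (1 - ∑ i, ∑ k, p (i, 0, k)) := by nlinarith
  have hC : 0 < (∑ i, ∑ j, p (i, j, 0)) * (1 - ∑ i, ∑ j, p (i, j, 0)) := by nlinarith
  rw [sqrt_helper _ _ _ _ _ hA hB hC]
  simp only [Fintype.sum_prod_type, Fin.sum_univ_two] at hsum
  simp only [Fin.sum_univ_two] at hx0 hx1 hy0 hy1 hz0 hz1 ⊢
  set q000 := p (0,0,0)
  set q001 := p (0,0,1)
  set q010 := p (0,1,0)
  set q011 := p (0,1,1)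
  set q100 := p (1,0,0)
  set q101 := p (1,0,1)
  set q110 := p (1,1,0)
  set q111 := p (1,1,1)
  have h111 : q111 = 1 - (q000 + q001 + (q010 + q011) + (q100 + q101 + q110)) := by
    linarith
  rw [h111]
  have d1 : q000 + q010 + (q100 + q110) ≠ 0 := hz0.ne'
  have d2 : (1:ℝ) - (q000 + q010 + (q100 + q110)) ≠ 0 := by linarith
  rw [show q001 + q011 + (q101 + (1 - (q000 + q001 + (q010 + q011) + (q100 + q101 + q110)))) = 1 - (q000 + q010 + (q100 + q110)) from by ring]
  rw [strat _ _ _ d1, strat _ _ _ d2]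
  have key := combine (q000 + q010 + (q100 + q110))
    ((q000 + q010) * (q000 + q100)) ((q001 + q011) * (q001 + q101))
    ((q000 + q001 + (q010 + q011)) * (q000 + q001 + (q100 + q101)))
    ((q000 + q010 - (q000 + q001 + (q010 + q011)) * (q000 + q010 + (q100 + q110))) *
      (q000 + q100 - (q000 + q001 + (q100 + q101)) * (q000 + q010 + (q100 + q110))))
    d1 d2 (by ring)
  linarith [key]
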